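/- Let (D,⊢,⊣) be a g-digroup. Then the bar-units are exactly the idempotents of each operation: {e ∈ D : e ⊢ e = e} = E(D) = {e ∈ D : e ⊣ e = e}. -/
import Mathlib


/-- An element `e` is a *bar-unit* for the pair of operations `(⊢, ⊣)` if
`e ⊢ a = a = a ⊣ e` for all `a`. -/
def IsBarUnit {D : Type*} (vd dv : D → D → D) (e : D) : Prop :=
  ∀ a : D, vd e a = a ∧ dv a e = a

/-- A generalized digroup (g-digroup): two associative operations `vd` (`⊢`) and `dv` (`⊣`)
satisfying inner associativity and the two bar-side irrelevance laws, admitting at least one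
bar-unit, and such that for every element `a` and every bar-unit `e` there is a unique pair
`(I e a, J e a)` with `(I e a) ⊣ a = e = a ⊢ (J e a)`. -/
structure GDigroup (D : Type*) where
  vd : D → D → D
  dv : D → D → D
  vd_assoc : ∀ a b c : D, vd (vd a b) c = vd a (vd b c)
  dv_assoc : ∀ a b c : D, dv (dv a b) c = dv a (dv b c)
  inner_assoc : ∀ a b c : D, dv (vd a b) c = vd a (dv b c)
  bar_right : ∀ a b c : D, dv a (vd b c) = dv a (dv b c)
  bar_left : ∀ a b c : D, vd (vd a b) c = vd (dv a b) c
  exists_barUnit : ∃ e : D, IsBarUnit vd dv e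
  I : D → D → D
  J : D → D → D
  I_spec : ∀ e a : D, IsBarUnit vd dv e → dv (I e a) a = e
  J_spec : ∀ e a : D, IsBarUnit vd dv e → vd a (J e a) = e
  I_unique : ∀ e a x : D, IsBarUnit vd dv e → dv x a = e → x = I e a
  J_unique : ∀ e a y : D, IsBarUnit vd dv e → vd a y = e → y = J e a

/-- In a g-digroup the bar-units are exactly the idempotents of each of the
two operations: `{e | e ⊢ e = e} = E(D) = {e | e ⊣ e = e}`. -/
theorem gdigroup_barUnits_eq_idempotents {D : Type*} (S : GDigroup D) :
    (∀ e : D, S.vd e e = e ↔ IsBarUnit S.vd S.dv e) ∧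
    (∀ e : D, S.dv e e = e ↔ IsBarUnit S.vd S.dv e) := by
  obtain ⟨e₀, he₀⟩ := S.exists_barUnit
  constructor
  · intro e
    constructor
    · intro hee
      -- first: e ⊢ e₀ = e₀
      have hJ : S.vd e (S.J e₀ e) = e₀ := S.J_spec e₀ e he₀
      have h1 : S.vd e e₀ = e₀ := by
        calc S.vd e e₀ = S.vd e (S.vd e (S.J e₀ e)) := by rw [hJ]
          _ = S.vd (S.vd e e) (S.J e₀ e) := (S.vd_assoc _ _ _).symm
          _ = S.vd e (S.J e₀ e) := by rw [hee]
          _ = e₀ := hJ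
      -- hence e ⊢ a = a for all a
      have hleft : ∀ a : D, S.vd e a = a := by
        intro a
        calc S.vd e a = S.vd e (S.vd e₀ a) := by rw [(he₀ a).1]
          _ = S.vd (S.vd e e₀) a := (S.vd_assoc _ _ _).symm
          _ = S.vd e₀ a := by rw [h1]
          _ = a := (he₀ a).1
      intro a
      refine ⟨hleft a, ?_⟩
      calc S.dv a e = S.dv a (S.dv e e₀) := by rw [(he₀ e).2]
        _ = S.dv a (S.vd e e₀) := (S.bar_right _ _ _).symm
        _ = S.dv a e₀ := by rw [h1]
        _ = a := (he₀ a).2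
    · intro h
      exact (h e).1
  · intro e
    constructor
    · intro hee
      -- first: e₀ ⊣ e = e₀
      have hI : S.dv (S.I e₀ e) e = e₀ := S.I_spec e₀ e he₀
      have h1 : S.dv e₀ e = e₀ := by
        calc S.dv e₀ e = S.dv (S.dv (S.I e₀ e) e) e := by rw [hI]
          _ = S.dv (S.I e₀ e) (S.dv e e) := S.dv_assoc _ _ _
          _ = S.dv (S.I e₀ e) e := by rw [hee]
          _ = e₀ := hI
      -- hence a ⊣ e = a for all a
      have hright : ∀ a : D, S.dv a e = a := by
        intro a
        calc S.dv a e = S.dv (S.dv a e₀) e := by rw [(he₀ a).2]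
          _ = S.dv a (S.dv e₀ e) := S.dv_assoc _ _ _
          _ = S.dv a e₀ := by rw [h1]
          _ = a := (he₀ a).2
      intro a
      refine ⟨?_, hright a⟩
      calc S.vd e a = S.vd (S.vd e₀ e) a := by rw [(he₀ e).1]
        _ = S.vd (S.dv e₀ e) a := S.bar_left _ _ _
        _ = S.vd e₀ a := by rw [h1]
        _ = a := (he₀ a).1
    · intro h
      exact (h e).2
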